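/- If in addition there exists a > 0 such that ‖∑_j c_j S_j‖_H = a ‖c‖_{ℓ²} for every c ∈ ℓ²(ℕ), then ⟪S_m, S_n⟫_H = a² δ_{mn} for all m, n ∈ ℕ (so (S_n) is a complete orthogonal system in H with all norms equal to a), and a² ⟪K s, K t⟫ = ∑_{n∈ℕ} \overline{S_n(s)} S_n(t) for all s, t ∈ Ω. -/

import Mathlib

open scoped InnerProductSpace

set_option maxHeartbeats 1000000 in
/-- The tight (`a = b`) case of the converse Kramer theorem (Hilbert-space case):
if `‖∑_j c_j S_j‖ = a₀‖c‖` for all `c ∈ ℓ²`, then `⟪S_m, S_n⟫ = a₀² δ_{mn}` and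
`a₀² ⟪K s, K u⟫ = ∑_n conj (S_n(s)) · S_n(u)` for all `s, u ∈ Ω`.
(The paper's inner product `⟪x,y⟫`, linear in the first argument, is `⟪y,x⟫_ℂ`.) -/
theorem stmt11 {Ω : Type*} [Nonempty Ω] {H : Type*}
    [NormedAddCommGroup H] [InnerProductSpace ℂ H] [CompleteSpace H]
    (K : Ω → H) (hK : Dense ((Submodule.span ℂ (Set.range K) : Submodule ℂ H) : Set H))
    (S : ℕ → H)
    (hl2 : ∀ t : Ω, Memℓp (fun j : ℕ => ⟪K t, S j⟫_ℂ) 2)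
    (hdense : Dense ((Submodule.span ℂ
        {f : lp (fun _ : ℕ => ℂ) 2 | ∃ t : Ω, ∀ j : ℕ, f j = ⟪K t, S j⟫_ℂ} :
          Submodule ℂ (lp (fun _ : ℕ => ℂ) 2)) : Set (lp (fun _ : ℕ => ℂ) 2)))
    (hindep : ∀ c : lp (fun _ : ℕ => ℂ) 2,
      (∀ t : Ω, ∑' j : ℕ, c j * ⟪K t, S j⟫_ℂ = 0) → c = 0)
    (t : ℕ → Ω) (a : ℕ → ℂ) (ha : ∀ j, a j ≠ 0)
    (hsamp1 : ∀ x : H, Memℓp (fun j : ℕ => ⟪K (t j), x⟫_ℂ / a j) 2)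
    (hsamp2 : ∀ x : H, ∀ s : Ω,
      Summable (fun j : ℕ => ‖⟪K (t j), x⟫_ℂ / a j * ⟪K s, S j⟫_ℂ‖) ∧
      ∑' j : ℕ, ⟪K (t j), x⟫_ℂ / a j * ⟪K s, S j⟫_ℂ = ⟪K s, x⟫_ℂ)
    (a₀ : ℝ) (ha₀ : 0 < a₀)
    (htight : ∀ c : lp (fun _ : ℕ => ℂ) 2, ∀ y : H,
      HasSum (fun j : ℕ => c j • S j) y → ‖y‖ = a₀ * ‖c‖) :
    (∀ m n : ℕ, ⟪S n, S m⟫_ℂ = if m = n then ((a₀ : ℂ) ^ 2) else 0) ∧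
    ∀ s u : Ω, (a₀ : ℂ) ^ 2 * ⟪K u, K s⟫_ℂ =
      ∑' n : ℕ, (starRingEnd ℂ) ⟪K s, S n⟫_ℂ * ⟪K u, S n⟫_ℂ := by
  classical
  have ha₀' : (a₀ : ℂ) ≠ 0 := by
    exact_mod_cast Complex.ofReal_ne_zero.mpr ha₀.ne'
  -- two-point HasSum helper
  have hs2 : ∀ (m n : ℕ) (z : ℂ),
      HasSum (fun j : ℕ =>
        ((lp.single 2 m 1 + z • lp.single 2 n 1 : lp (fun _ : ℕ => ℂ) 2)) j • S j)
        (S m + z • S n) := by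
    intro m n z
    have h1 : HasSum (fun j : ℕ => ((lp.single 2 m (1:ℂ) : lp (fun _ : ℕ => ℂ) 2)) j • S j)
        (((lp.single 2 m (1:ℂ) : lp (fun _ : ℕ => ℂ) 2)) m • S m) :=
      hasSum_single m (fun j hj => by rw [lp.single_apply_ne 2 m _ hj, zero_smul])
    have h2 : HasSum (fun j : ℕ => ((z • lp.single 2 n (1:ℂ) : lp (fun _ : ℕ => ℂ) 2)) j • S j)
        (((z • lp.single 2 n (1:ℂ) : lp (fun _ : ℕ => ℂ) 2)) n • S n) :=
      hasSum_single n (fun j hj => by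
        rw [lp.coeFn_smul, Pi.smul_apply, lp.single_apply_ne 2 n _ hj, smul_zero, zero_smul])
    have h3 := h1.add h2
    rw [lp.single_apply_self] at h3
    convert h3 using 2 with j
    · rw [lp.coeFn_add, Pi.add_apply, add_smul]
    · rw [one_smul]
    · rw [lp.coeFn_smul, Pi.smul_apply, lp.single_apply_self, smul_eq_mul, mul_one]
  have hkey : ∀ (m n : ℕ) (z : ℂ), ‖S m + z • S n‖ =
      a₀ * ‖(lp.single 2 m 1 + z • lp.single 2 n 1 : lp (fun _ : ℕ => ℂ) 2)‖ :=
    fun m n z => htight _ _ (hs2 m n z)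
  -- orthogonality
  have hortho : ∀ m n : ℕ, ⟪S n, S m⟫_ℂ = if m = n then ((a₀ : ℂ) ^ 2) else 0 := by
    intro m n
    have k1 : ‖S n + S m‖ =
        a₀ * ‖(lp.single 2 n 1 + lp.single 2 m (1:ℂ) : lp (fun _ : ℕ => ℂ) 2)‖ := by
      simpa using hkey n m 1
    have k2 : ‖S n - S m‖ =
        a₀ * ‖(lp.single 2 n 1 - lp.single 2 m (1:ℂ) : lp (fun _ : ℕ => ℂ) 2)‖ := by
      simpa [neg_one_smul, ← sub_eq_add_neg] using hkey n m (-1)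
    have k3 : ‖S n - Complex.I • S m‖ =
        a₀ * ‖(lp.single 2 n 1 - Complex.I • lp.single 2 m (1:ℂ) : lp (fun _ : ℕ => ℂ) 2)‖ := by
      simpa [neg_smul, ← sub_eq_add_neg] using hkey n m (-Complex.I)
    have k4 := hkey n m Complex.I
    have p1 := inner_eq_sum_norm_sq_div_four (𝕜 := ℂ) (S n) (S m)
    have p2 := inner_eq_sum_norm_sq_div_four (𝕜 := ℂ)
      (lp.single 2 n (1:ℂ) : lp (fun _ : ℕ => ℂ) 2) (lp.single 2 m (1:ℂ))
    simp only [RCLike.I_to_complex, Complex.coe_algebraMap] at p1 p2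
    have hmain : ⟪S n, S m⟫_ℂ = (a₀ : ℂ) ^ 2 *
        ⟪(lp.single 2 n (1:ℂ) : lp (fun _ : ℕ => ℂ) 2), lp.single 2 m (1:ℂ)⟫_ℂ := by
      rw [p1, p2, k1, k2, k3, k4]
      push_cast
      ring
    rw [hmain, lp.inner_single_left]
    simp only [lp.single_apply]
    by_cases h : m = n
    · subst h; simp
    · rw [Pi.single_apply, if_neg (Ne.symm h), if_neg h]
      simp
  refine ⟨hortho, ?_⟩
  -- orthonormal system e
  set e : ℕ → H := fun j => ((a₀ : ℂ))⁻¹ • S j with he_def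
  have he : Orthonormal ℂ e := by
    rw [orthonormal_iff_ite]
    intro i j
    have h := hortho j i
    simp only [he_def, inner_smul_left, inner_smul_right, h, map_inv₀, Complex.conj_ofReal]
    by_cases hij : i = j
    · subst hij; rw [if_pos rfl, if_pos rfl]
      field_simp
    · rw [if_neg (fun hh => hij hh.symm), if_neg hij]
      ring
  -- convergence of ∑ c j • S j for every c ∈ ℓ²
  have hconv : ∀ c : lp (fun _ : ℕ => ℂ) 2, Summable (fun j : ℕ => c j • S j) := by
    intro c
    have h := (he.orthogonalFamily).summable_of_lp ((a₀ : ℂ) • c)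
    refine h.congr fun j => ?_
    rw [LinearIsometry.toSpanSingleton_apply, lp.coeFn_smul, Pi.smul_apply, he_def]
    rw [smul_smul, smul_eq_mul]
    rw [mul_comm ((a₀:ℂ)) (c j), mul_assoc, mul_inv_cancel₀ ha₀', mul_one]
  -- reconstruction: every x is the sum of its sampling series
  have hrecon : ∀ x : H, ∃ c : lp (fun _ : ℕ => ℂ) 2, HasSum (fun j : ℕ => c j • S j) x := by
    intro x
    set c : lp (fun _ : ℕ => ℂ) 2 := ⟨fun j => ⟪K (t j), x⟫_ℂ / a j, hsamp1 x⟩ with hc_def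
    have hy : HasSum (fun j : ℕ => c j • S j) (∑' j, c j • S j) := (hconv c).hasSum
    set y := ∑' j, c j • S j with hy_def
    have hinner : ∀ s : Ω, ⟪K s, y⟫_ℂ = ⟪K s, x⟫_ℂ := by
      intro s
      have h1 : HasSum (fun j : ℕ => (innerSL ℂ (K s)) (c j • S j)) ((innerSL ℂ (K s)) y) :=
        hy.mapL (innerSL ℂ (K s))
      have h2 : ∀ j : ℕ, (innerSL ℂ (K s)) (c j • S j) =
          ⟪K (t j), x⟫_ℂ / a j * ⟪K s, S j⟫_ℂ := by
        intro j
        simp only [innerSL_apply_apply, inner_smul_right]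
        rfl
      have h3 : HasSum (fun j : ℕ => ⟪K (t j), x⟫_ℂ / a j * ⟪K s, S j⟫_ℂ) ⟪K s, y⟫_ℂ := by
        simpa only [innerSL_apply_apply] using h1.congr_fun (fun j => (h2 j).symm)
      rw [← h3.tsum_eq, (hsamp2 x s).2]
    have hxy : x - y = 0 := by
      refine hK.eq_zero_of_inner_left ℂ fun w hw => ?_
      induction hw using Submodule.span_induction with
      | mem w hw =>
        obtain ⟨s, rfl⟩ := hw
        rw [← inner_conj_symm]
        simp [inner_sub_right, hinner s]
      | zero => simp
      | add w₁ w₂ _ _ ih1 ih2 => simp [inner_add_right, ih1, ih2]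
      | smul r w _ ih => simp [inner_smul_right, ih]
    exact ⟨c, (sub_eq_zero.mp hxy) ▸ hy⟩
  -- dense span of e
  have hspan : ⊤ ≤ (Submodule.span ℂ (Set.range e)).topologicalClosure := by
    rintro x -
    obtain ⟨c, hy⟩ := hrecon x
    refine mem_closure_of_tendsto hy (Filter.Eventually.of_forall fun F => ?_)
    simp only [SetLike.mem_coe]
    refine Submodule.sum_mem _ fun j _ => ?_
    have : c j • S j = ((a₀ : ℂ) * c j) • e j := by
      rw [he_def, smul_smul, mul_comm ((a₀:ℂ)) (c j), mul_assoc, mul_inv_cancel₀ ha₀', mul_one]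
    rw [this]
    exact Submodule.smul_mem _ _ (Submodule.subset_span ⟨j, rfl⟩)
  -- Hilbert basis and Parseval
  let b : HilbertBasis ℕ ℂ H := HilbertBasis.mk he hspan
  have hb : ⇑b = e := HilbertBasis.coe_mk _ _
  intro s u
  have hP := b.tsum_inner_mul_inner (K u) (K s)
  have hterm : ∀ n : ℕ, (a₀ : ℂ) ^ 2 * (⟪K u, b n⟫_ℂ * ⟪b n, K s⟫_ℂ) =
      (starRingEnd ℂ) ⟪K s, S n⟫_ℂ * ⟪K u, S n⟫_ℂ := by
    intro n
    rw [hb, he_def]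
    simp only [inner_smul_right, inner_smul_left, map_inv₀, Complex.conj_ofReal,
      ← inner_conj_symm (S n) (K s)]
    rw [← inner_conj_symm (K s) (S n)]
    field_simp
  calc (a₀ : ℂ) ^ 2 * ⟪K u, K s⟫_ℂ
      = (a₀ : ℂ) ^ 2 * ∑' n, ⟪K u, b n⟫_ℂ * ⟪b n, K s⟫_ℂ := by rw [hP]
    _ = ∑' n, (a₀ : ℂ) ^ 2 * (⟪K u, b n⟫_ℂ * ⟪b n, K s⟫_ℂ) := (tsum_mul_left).symm
    _ = ∑' n, (starRingEnd ℂ) ⟪K s, S n⟫_ℂ * ⟪K u, S n⟫_ℂ := tsum_congr hterm
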